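/- Let 0 < m ≤ L and (L−m)/(L+m) ≤ ρ < 1, α = (1−ρ)/m, λ = ρ/(m(L−m)(ρ+1)) (take L > m), P = 1/(1−ρ²). Then the 2×2 matrix with entries [ (1−ρ²)P − 2mLλ , −αP + (L+m)λ ; −αP + (L+m)λ , α²P − 2λ ] equals −c · [ m, −1; −1, 1/m ] where c = (L+m)/(m(L−m)(1+ρ)) · (ρ − (L−m)/(L+m)) ≥ 0; in particular this matrix is negative semidefinite. -/

import Mathlib

theorem stmt_7 (m L ρ : ℝ) (hm : 0 < m) (hmL : m < L)
    (hρ1 : (L - m) / (L + m) ≤ ρ) (hρ2 : ρ < 1) :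
    let α := (1 - ρ) / m
    let lam := ρ / (m * (L - m) * (ρ + 1))
    let P := 1 / (1 - ρ ^ 2)
    let c := (L + m) / (m * (L - m) * (1 + ρ)) * (ρ - (L - m) / (L + m))
    let X : Matrix (Fin 2) (Fin 2) ℝ :=
      !![(1 - ρ ^ 2) * P - 2 * m * L * lam, -α * P + (L + m) * lam;
         -α * P + (L + m) * lam, α ^ 2 * P - 2 * lam]
    X = -c • !![m, -1; -1, 1 / m] ∧ 0 ≤ c ∧ (-X).PosSemidef := by
  intro α lam P c X
  have hL : 0 < L := hm.trans hmL
  have hLm : 0 < L - m := by linarith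
  have hLpm : 0 < L + m := by linarith
  have hρ0 : 0 < ρ := lt_of_lt_of_le (div_pos hLm hLpm) hρ1
  have hρp1 : 0 < ρ + 1 := by linarith
  have h1ρ2 : 1 - ρ ^ 2 ≠ 0 := by nlinarith
  have hc0 : 0 ≤ c := by
    have h1 : 0 ≤ ρ - (L - m) / (L + m) := by linarith
    have h2 : 0 ≤ (L + m) / (m * (L - m) * (1 + ρ)) := by positivity
    exact mul_nonneg h2 h1
  have hm' : m ≠ 0 := ne_of_gt hm
  have hXeq : X = -c • !![m, -1; -1, 1 / m] := by
    show (!![(1 - ρ ^ 2) * P - 2 * m * L * lam, -α * P + (L + m) * lam;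
         -α * P + (L + m) * lam, α ^ 2 * P - 2 * lam] : Matrix (Fin 2) (Fin 2) ℝ)
      = -c • !![m, -1; -1, 1 / m]
    ext i j
    fin_cases i <;> fin_cases j <;>
      · simp only [Matrix.cons_val', Matrix.cons_val_zero, Matrix.cons_val_one,
          Matrix.head_cons, Matrix.head_fin_const, Matrix.smul_apply, Matrix.of_apply,
          smul_eq_mul, Matrix.empty_val', Matrix.cons_val_fin_one, Fin.isValue,
          Matrix.cons_val_zero, Matrix.head_cons, Fin.zero_eta, Fin.mk_one]
        show _ = _
        simp only [α, lam, P, c]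
        field_simp
        ring
  refine ⟨hXeq, hc0, ?_⟩
  rw [hXeq, ← neg_smul, neg_neg]
  rw [Matrix.posSemidef_iff_dotProduct_mulVec]
  constructor
  · ext i j
    fin_cases i <;> fin_cases j <;> simp [Matrix.conjTranspose, Matrix.transpose, Matrix.vecHead, Matrix.vecTail]
  · intro x
    have hq : dotProduct (star x) (Matrix.mulVec (c • !![m, -1; -1, 1 / m]) x)
        = c * ((m * x 0 - x 1) ^ 2 / m) := by
      simp [Matrix.mulVec, dotProduct, Fin.sum_univ_two]
      field_simp
      ring
    rw [hq]
    positivity
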